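/- Let (M,E) be a Landsberg space (𝒞′ = 0, equivalently P = 0). If for every X ∈ N_𝔎 and every Z one has D̊_{JZ}X ∈ N_𝔎, then N_𝔎 ⊆ N_R, and hence N_𝔎 = N_R. -/
import Mathlib


/-- Landsberg space (`𝒞' = 0`, `P = 0`): if `N_𝔎` is stable under all
`D̊_{JZ}`, then `N_𝔎 ⊆ N_R`, hence `N_𝔎 = N_R`. Context:
`R(X,Y)Z = R̊(X,Y)Z + 𝒞(F𝔎(X,Y),Z)`, `R̊(X,Y)Z = (D̊_{JZ}𝔎)(X,Y)`,
and `R(X,Y)S = 𝔎(X,Y)` giving `N_R ⊆ N_𝔎`. -/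
theorem stmt_12 {W : Type*} [AddCommGroup W]
    (h : W → W) (J F : W → W) (R Rb : W → W → W → W) (K : W → W → W)
    (C : W → W → W) (Db : W → W → W) (S : W)
    (hRS : ∀ X Y, R X Y S = K X Y)
    (hLand : ∀ X Y Z, R X Y Z = Rb X Y Z + C (F (K X Y)) Z)
    (hRb : ∀ X Y Z, Rb X Y Z =
      Db (J Z) (K X Y) - K (Db (J Z) X) Y - K X (Db (J Z) Y))
    (hDb0 : ∀ U, Db U 0 = 0)
    (hCF0 : ∀ Z, C (F 0) Z = 0)
    (hKanti : ∀ X Y, K X Y = -(K Y X))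
    (hstab : ∀ X Z, (h X = X ∧ ∀ Y, K X Y = 0) →
      (h (Db (J Z) X) = Db (J Z) X ∧ ∀ Y, K (Db (J Z) X) Y = 0)) :
    ∀ X, (h X = X ∧ ∀ Y, K X Y = 0) ↔ (h X = X ∧ ∀ Y Z, R X Y Z = 0) := by
  intro X
  constructor
  · rintro ⟨hX, hK⟩
    refine ⟨hX, fun Y Z => ?_⟩
    have hKX : K X Y = 0 := hK Y
    have hs := hstab X Z ⟨hX, hK⟩
    rw [hLand, hRb, hKX, hCF0, hDb0, hs.2 Y, hK (Db (J Z) Y)]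
    simp
  · rintro ⟨hX, hR⟩
    exact ⟨hX, fun Y => by rw [← hRS, hR]⟩
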